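/- Let G be a finite connected weighted graph with more than one vertex and Ψ a functional given by ψ ∈ ℓ²(G) with Ψ(χ_G) ≠ 0. Then for every f ∈ ℓ²(G) and every ε > 0: ‖f‖² ≤ (1+ε)(θ/λ₁)‖∇f‖² + ((1+ε)/ε)(|G|²/|Ψ(χ_G)|²)|Ψ(f)|², where θ = |G|‖ψ‖²/|Ψ(χ_G)|². -/

import Mathlib

open Finset

noncomputable def lap {V : Type*} [Fintype V] (w : V → V → ℝ) (f : V → ℂ) : V → ℂ :=
  fun v => ∑ u, (f v - f u) * (w v u : ℂ)

noncomputable def gip {V : Type*} [Fintype V] (f g : V → ℂ) : ℂ :=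
  ∑ v, f v * (starRingEnd ℂ) (g v)

noncomputable def gradSq {V : Type*} [Fintype V] (w : V → V → ℝ) (f : V → ℂ) : ℝ :=
  (1 / 2) * ∑ u, ∑ v, ‖f u - f v‖ ^ 2 * w u v

noncomputable def normSq {V : Type*} [Fintype V] (f : V → ℂ) : ℝ := ∑ v, ‖f v‖ ^ 2

/-- `μ` is an eigenvalue of the weighted graph Laplacian. -/
def IsEigen {V : Type*} [Fintype V] (w : V → V → ℝ) (μ : ℝ) : Prop :=
  ∃ g : V → ℂ, g ≠ 0 ∧ lap w g = fun v => (μ : ℂ) * g v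


section PoincareAux

variable {V : Type*} [Fintype V]

private lemma mul_conj_self' (z : ℂ) : z * (starRingEnd ℂ) z = ((‖z‖ ^ 2 : ℝ) : ℂ) := by
  rw [Complex.mul_conj, Complex.normSq_eq_norm_sq]

private lemma gip_conj' (f g : V → ℂ) : gip f g = (starRingEnd ℂ) (gip g f) := by
  unfold gip
  rw [map_sum]
  exact Finset.sum_congr rfl fun v _ => by rw [map_mul, Complex.conj_conj, mul_comm]

private lemma gip_lap' (w : V → V → ℝ) (hsym : ∀ u v, w u v = w v u) (f g : V → ℂ) :
    gip (lap w f) g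
      = (2 : ℂ)⁻¹ * ∑ u, ∑ v, (f u - f v) * (starRingEnd ℂ) (g u - g v) * (w u v : ℂ) := by
  have base : gip (lap w f) g = ∑ u, ∑ v, (f u - f v) * (starRingEnd ℂ) (g u) * (w u v : ℂ) := by
    unfold gip lap
    simp only [Finset.sum_mul]
    exact Finset.sum_congr rfl fun u _ => Finset.sum_congr rfl fun v _ => by ring
  have swap : ∑ u, ∑ v, (f u - f v) * (starRingEnd ℂ) (g v) * (w u v : ℂ)
      = - ∑ u, ∑ v, (f u - f v) * (starRingEnd ℂ) (g u) * (w u v : ℂ) := by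
    rw [Finset.sum_comm, ← Finset.sum_neg_distrib]
    refine Finset.sum_congr rfl fun u _ => ?_
    rw [← Finset.sum_neg_distrib]
    refine Finset.sum_congr rfl fun v _ => ?_
    rw [hsym v u]
    ring
  have expand : ∑ u, ∑ v, (f u - f v) * (starRingEnd ℂ) (g u - g v) * (w u v : ℂ)
      = (∑ u, ∑ v, (f u - f v) * (starRingEnd ℂ) (g u) * (w u v : ℂ))
        - ∑ u, ∑ v, (f u - f v) * (starRingEnd ℂ) (g v) * (w u v : ℂ) := by
    rw [← Finset.sum_sub_distrib]
    refine Finset.sum_congr rfl fun u _ => ?_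
    rw [← Finset.sum_sub_distrib]
    refine Finset.sum_congr rfl fun v _ => ?_
    rw [map_sub]; ring
  rw [base, expand, swap]; ring

private lemma gip_lap_self' (w : V → V → ℝ) (hsym : ∀ u v, w u v = w v u) (f : V → ℂ) :
    gip (lap w f) f = ((gradSq w f : ℝ) : ℂ) := by
  rw [gip_lap' w hsym]
  unfold gradSq
  push_cast
  rw [Finset.mul_sum, Finset.mul_sum]
  refine Finset.sum_congr rfl fun u _ => ?_
  rw [Finset.mul_sum, Finset.mul_sum]
  refine Finset.sum_congr rfl fun v _ => ?_
  rw [mul_conj_self']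
  push_cast
  ring

private lemma gip_self' (f : V → ℂ) : gip f f = ((normSq f : ℝ) : ℂ) := by
  unfold gip normSq
  push_cast
  exact Finset.sum_congr rfl fun v _ => by rw [mul_conj_self']; push_cast; ring

private lemma normSq_nonneg' (f : V → ℂ) : 0 ≤ normSq f :=
  Finset.sum_nonneg fun _ _ => sq_nonneg _

private lemma normSq_pos' (f : V → ℂ) (hf : f ≠ 0) : 0 < normSq f := by
  obtain ⟨v, hv⟩ : ∃ v, f v ≠ 0 := by
    by_contra h
    push_neg at h
    exact hf (funext h)
  have h1 : 0 < ‖f v‖ ^ 2 := pow_pos (norm_pos_iff.mpr hv) 2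
  exact lt_of_lt_of_le h1
    (Finset.single_le_sum (fun i _ => sq_nonneg ‖f i‖) (Finset.mem_univ v))

private lemma gradSq_nonneg' (w : V → V → ℝ) (hnn : ∀ u v, 0 ≤ w u v) (f : V → ℂ) :
    0 ≤ gradSq w f := by
  unfold gradSq
  have : 0 ≤ ∑ u, ∑ v, ‖f u - f v‖ ^ 2 * w u v :=
    Finset.sum_nonneg fun u _ => Finset.sum_nonneg fun v _ =>
      mul_nonneg (sq_nonneg _) (hnn u v)
  linarith

noncomputable def lapT (w : V → V → ℝ) : EuclideanSpace ℂ V →ₗ[ℂ] EuclideanSpace ℂ V where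
  toFun f := WithLp.toLp 2 (lap w f)
  map_add' f g := by
    ext v
    show lap w (fun x => f x + g x) v = lap w f v + lap w g v
    unfold lap
    rw [← Finset.sum_add_distrib]
    exact Finset.sum_congr rfl fun u _ => by ring
  map_smul' c f := by
    ext v
    show lap w (fun x => c * f x) v = c * lap w f v
    unfold lap
    rw [Finset.mul_sum]
    exact Finset.sum_congr rfl fun u _ => by ring

private lemma lapT_apply (w : V → V → ℝ) (f : EuclideanSpace ℂ V) :
    lapT w f = lap w f := rfl

private lemma inner_eq_gip (x y : EuclideanSpace ℂ V) : (inner ℂ x y : ℂ) = gip y x := by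
  rw [PiLp.inner_apply]
  unfold gip
  exact Finset.sum_congr rfl fun v _ => by rw [RCLike.inner_apply]

private lemma lapT_isSymm (w : V → V → ℝ) (hsym : ∀ u v, w u v = w v u) :
    (lapT (V := V) w).IsSymmetric := by
  intro x y
  rw [inner_eq_gip, inner_eq_gip]
  show gip y (lap w x) = gip (lap w y) x
  rw [gip_conj' y (lap w x), gip_lap' w hsym, gip_lap' w hsym, map_mul, map_sum]
  have h2 : (starRingEnd ℂ) (2 : ℂ)⁻¹ = (2 : ℂ)⁻¹ := by
    rw [map_inv₀, Complex.conj_ofNat]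
  rw [h2]
  congr 1
  refine Finset.sum_congr rfl fun u _ => ?_
  rw [map_sum]
  refine Finset.sum_congr rfl fun v _ => ?_
  simp only [map_mul, map_sub, Complex.conj_conj, Complex.conj_ofReal]
  ring

private lemma const_of_adj (G : SimpleGraph V) (hconn : G.Connected) (e : V → ℂ)
    (h : ∀ u v, G.Adj u v → e u = e v) : ∀ u v, e u = e v := by
  intro u v
  obtain ⟨p⟩ := hconn.preconnected u v
  induction p with
  | nil => rfl
  | cons hadj _ ih => exact (h _ _ hadj).trans ih

private lemma lap_zero_const (w : V → V → ℝ) (hsym : ∀ u v, w u v = w v u)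
    (hnn : ∀ u v, 0 ≤ w u v)
    (hconn : (SimpleGraph.fromRel fun u v : V => w u v ≠ 0).Connected)
    (e : V → ℂ) (he : lap w e = 0) : ∀ u v, e u = e v := by
  have h0 : gip (lap w e) e = 0 := by rw [he]; simp [gip]
  rw [gip_lap_self' w hsym] at h0
  have hg0 : gradSq w e = 0 := by exact_mod_cast h0
  have hsum : ∑ u, ∑ v, ‖e u - e v‖ ^ 2 * w u v = 0 := by
    unfold gradSq at hg0; linarith
  have hterm : ∀ u v, ‖e u - e v‖ ^ 2 * w u v = 0 := by
    intro u v
    have h1 := (Finset.sum_eq_zero_iff_of_nonneg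
      (fun u _ => Finset.sum_nonneg fun v _ => mul_nonneg (sq_nonneg _) (hnn u v))).mp hsum
      u (Finset.mem_univ u)
    exact (Finset.sum_eq_zero_iff_of_nonneg
      (fun v _ => mul_nonneg (sq_nonneg _) (hnn u v))).mp h1 v (Finset.mem_univ v)
  have hadj : ∀ u v, w u v ≠ 0 → e u = e v := by
    intro u v hw
    have hmul := hterm u v
    have h2 : ‖e u - e v‖ ^ 2 = 0 := by
      rcases mul_eq_zero.mp hmul with h | h
      · exact h
      · exact absurd h hw
    have h3 : e u - e v = 0 := by
      rw [pow_eq_zero_iff (by norm_num)] at h2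
      exact norm_eq_zero.mp h2
    exact sub_eq_zero.mp h3
  exact const_of_adj _ hconn e (fun u v hadjuv => by
    rw [SimpleGraph.fromRel_adj] at hadjuv
    rcases hadjuv.2 with h | h
    · exact hadj u v h
    · exact (hadj v u h).symm)

private lemma poincare_orth (w : V → V → ℝ) (hsym : ∀ u v, w u v = w v u)
    (hnn : ∀ u v, 0 ≤ w u v)
    (hconn : (SimpleGraph.fromRel fun u v : V => w u v ≠ 0).Connected)
    (lam1 : ℝ) (hlam : IsLeast {μ : ℝ | μ ≠ 0 ∧ IsEigen w μ} lam1)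
    (g : V → ℂ) (hg : ∑ v, g v = 0) : lam1 * normSq g ≤ gradSq w g := by
  classical
  have hT := lapT_isSymm (V := V) w hsym
  have hfr : Module.finrank ℂ (EuclideanSpace ℂ V) = Fintype.card V := finrank_euclideanSpace
  set b := hT.eigenvectorBasis hfr with hb_def
  set μ := hT.eigenvalues hfr with hμ_def
  have hb : ∀ i, lapT w (b i) = (μ i : ℂ) • b i := fun i => hT.apply_eigenvectorBasis hfr i
  set G : EuclideanSpace ℂ V := WithLp.toLp 2 g with hG_def
  set c : Fin (Fintype.card V) → ℂ := fun i => (inner ℂ (b i) G : ℂ) with hc_def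
  have hpars : ∑ i, (‖c i‖ ^ 2 : ℝ) = normSq g := by
    have h1 : ∑ i, (inner ℂ G (b i) : ℂ) * (inner ℂ (b i) G : ℂ) = inner ℂ G G :=
      b.sum_inner_mul_inner G G
    have h2 : ∀ i, (inner ℂ G (b i) : ℂ) * (inner ℂ (b i) G : ℂ) = ((‖c i‖ ^ 2 : ℝ) : ℂ) := by
      intro i
      have hz : (inner ℂ G (b i) : ℂ) = (starRingEnd ℂ) (c i) := (inner_conj_symm G (b i)).symm
      have hz2 : (inner ℂ (b i) G : ℂ) = c i := rfl
      rw [hz, hz2, mul_comm, mul_conj_self']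
    rw [Finset.sum_congr rfl (fun i _ => h2 i)] at h1
    have h3 : (inner ℂ G G : ℂ) = ((normSq g : ℝ) : ℂ) := by
      rw [inner_eq_gip]; exact gip_self' g
    rw [h3] at h1
    exact_mod_cast h1
  have hspec : ∑ i, μ i * ‖c i‖ ^ 2 = gradSq w g := by
    have h1 : ∑ i, (inner ℂ G (b i) : ℂ) * (inner ℂ (b i) (lapT w G) : ℂ) = inner ℂ G (lapT w G) :=
      b.sum_inner_mul_inner G (lapT w G)
    have h2 : ∀ i, (inner ℂ (b i) (lapT w G) : ℂ) = (μ i : ℂ) * (inner ℂ (b i) G : ℂ) := by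
      intro i
      rw [← hT (b i) G, hb i, inner_smul_left]
      rw [Complex.conj_ofReal]
    have h3 : ∀ i, (inner ℂ G (b i) : ℂ) * ((μ i : ℂ) * (inner ℂ (b i) G : ℂ))
        = ((μ i * ‖c i‖ ^ 2 : ℝ) : ℂ) := by
      intro i
      have hz : (inner ℂ G (b i) : ℂ) = (starRingEnd ℂ) (c i) := (inner_conj_symm G (b i)).symm
      have hz2 : (inner ℂ (b i) G : ℂ) = c i := rfl
      rw [hz, hz2, show (starRingEnd ℂ) (c i) * ((μ i : ℂ) * c i)
          = (μ i : ℂ) * (c i * (starRingEnd ℂ) (c i)) by ring, mul_conj_self']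
      push_cast; ring
    rw [Finset.sum_congr rfl (fun i _ => by rw [h2 i, h3 i])] at h1
    have h4 : (inner ℂ G (lapT w G) : ℂ) = ((gradSq w g : ℝ) : ℂ) := by
      rw [inner_eq_gip, lapT_apply]
      exact gip_lap_self' w hsym g
    rw [h4] at h1
    exact_mod_cast h1
  have hterm : ∀ i, lam1 * ‖c i‖ ^ 2 ≤ μ i * ‖c i‖ ^ 2 := by
    intro i
    by_cases hci : c i = 0
    · simp [hci]
    · have hμne : μ i ≠ 0 := by
        intro hμ0
        have hlap0 : lap w (b i) = 0 := by
          have hzz := hb i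
          rw [hμ0] at hzz
          simp only [Complex.ofReal_zero, zero_smul] at hzz
          rw [← lapT_apply w (b i), hzz]
          rfl
        have hconst := lap_zero_const w hsym hnn hconn (b i) hlap0
        apply hci
        rcases isEmpty_or_nonempty V with hV | hV
        · show (inner ℂ (b i) G : ℂ) = 0
          rw [inner_eq_gip]
          unfold gip
          simp
        · obtain ⟨v₀⟩ := hV
          have hcv : ∀ v, (b i : V → ℂ) v = (b i : V → ℂ) v₀ := fun v => hconst v v₀
          show (inner ℂ (b i) G : ℂ) = 0
          rw [inner_eq_gip]
          unfold gip
          calc ∑ v, g v * (starRingEnd ℂ) ((b i : V → ℂ) v)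
              = ∑ v, g v * (starRingEnd ℂ) ((b i : V → ℂ) v₀) := by
                exact Finset.sum_congr rfl fun v _ => by rw [hcv v]
            _ = (∑ v, g v) * (starRingEnd ℂ) ((b i : V → ℂ) v₀) := by
                rw [Finset.sum_mul]
            _ = 0 := by rw [hg, zero_mul]
      have heig : IsEigen w (μ i) := by
        refine ⟨b i, fun h => b.orthonormal.ne_zero i (WithLp.ofLp_injective 2 h), ?_⟩
        funext v
        have hzz := congrFun (congrArg (fun x : EuclideanSpace ℂ V => (x : V → ℂ)) (hb i)) v
        rw [← lapT_apply w (b i)]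
        exact hzz
      have hle : lam1 ≤ μ i := hlam.2 ⟨hμne, heig⟩
      exact mul_le_mul_of_nonneg_right hle (sq_nonneg _)
  calc lam1 * normSq g = ∑ i, lam1 * ‖c i‖ ^ 2 := by rw [← Finset.mul_sum, hpars]
    _ ≤ ∑ i, μ i * ‖c i‖ ^ 2 := Finset.sum_le_sum fun i _ => hterm i
    _ = gradSq w g := hspec

private lemma gip_cs (a c : V → ℂ) : ‖gip a c‖ ^ 2 ≤ normSq a * normSq c := by
  have key : ∀ x : EuclideanSpace ℂ V, ‖x‖ ^ 2 = normSq x := by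
    intro x
    rw [EuclideanSpace.norm_eq, Real.sq_sqrt (Finset.sum_nonneg fun _ _ => sq_nonneg _)]
    rfl
  set A : EuclideanSpace ℂ V := WithLp.toLp 2 a with hA
  set C : EuclideanSpace ℂ V := WithLp.toLp 2 c with hC
  have h1 : ‖(inner ℂ C A : ℂ)‖ ≤ ‖C‖ * ‖A‖ := norm_inner_le_norm C A
  have h2 : (inner ℂ C A : ℂ) = gip a c := inner_eq_gip C A
  rw [h2] at h1
  have h3 : ‖gip a c‖ ^ 2 ≤ (‖C‖ * ‖A‖) ^ 2 := by
    apply pow_le_pow_left₀ (norm_nonneg _) h1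
  calc ‖gip a c‖ ^ 2 ≤ (‖C‖ * ‖A‖) ^ 2 := h3
    _ = ‖A‖ ^ 2 * ‖C‖ ^ 2 := by ring
    _ = normSq a * normSq c := by rw [key A, key C]

private lemma sum_center (h : V → ℂ) (hc : (Fintype.card V : ℂ) ≠ 0) :
    ∑ v, (h v - (∑ u, h u) / (Fintype.card V : ℂ)) = 0 := by
  rw [Finset.sum_sub_distrib, Finset.sum_const, Finset.card_univ, nsmul_eq_mul]
  field_simp
  simp

private lemma pythagoras (g : V → ℂ) (m : ℂ) (hg : ∑ v, g v = 0) :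
    normSq (fun v => g v + m) = normSq g + (Fintype.card V : ℝ) * ‖m‖ ^ 2 := by
  have key : gip (fun v => g v + m) (fun v => g v + m)
      = gip g g + (((Fintype.card V : ℝ) * ‖m‖ ^ 2 : ℝ) : ℂ) := by
    unfold gip
    have expand : ∀ v ∈ Finset.univ, (g v + m) * (starRingEnd ℂ) (g v + m)
        = g v * (starRingEnd ℂ) (g v) + g v * (starRingEnd ℂ) m
          + (m * (starRingEnd ℂ) (g v) + m * (starRingEnd ℂ) m) := by
      intro v _
      rw [map_add]; ring
    rw [Finset.sum_congr rfl expand, Finset.sum_add_distrib, Finset.sum_add_distrib,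
      Finset.sum_add_distrib, ← Finset.sum_mul, hg, zero_mul, ← Finset.mul_sum,
      ← map_sum, hg, map_zero, mul_zero, Finset.sum_const, Finset.card_univ,
      nsmul_eq_mul, mul_conj_self']
    push_cast
    ring
  have h1 : ((normSq (fun v => g v + m) : ℝ) : ℂ)
      = ((normSq g + (Fintype.card V : ℝ) * ‖m‖ ^ 2 : ℝ) : ℂ) := by
    rw [← gip_self', key, gip_self']
    push_cast
    ring
  exact_mod_cast h1

set_option maxHeartbeats 1000000 in
private lemma final_arith (n P A2 R B D S lam1 ε cn : ℝ)
    (hn1 : 1 ≤ n) (hP : 0 < P) (hε : 0 < ε) (hlam : 0 < lam1)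
    (hA2 : 0 ≤ A2) (hR0 : 0 ≤ R) (hB0 : 0 ≤ B) (hD0 : 0 ≤ D)
    (hψ'0 : 0 ≤ S - P ^ 2 / n)
    (hCS : R ^ 2 ≤ A2 * (S - P ^ 2 / n))
    (h4 : cn * P ≤ B + R) (hcn : 0 ≤ cn)
    (hpo : lam1 * A2 ≤ D) :
    A2 + n * cn ^ 2 ≤ (1 + ε) * ((n * S / P ^ 2) / lam1) * D
      + ((1 + ε) / ε) * (n ^ 2 / P ^ 2) * B ^ 2 := by
  have hn0 : (0 : ℝ) < n := lt_of_lt_of_le one_pos hn1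
  have e : n * (S - P ^ 2 / n) = n * S - P ^ 2 := by
    rw [mul_sub, mul_comm n (P ^ 2 / n), div_mul_cancel₀ _ hn0.ne']
  have hnSP : 0 ≤ n * S - P ^ 2 := by
    rw [← e]
    exact mul_nonneg hn0.le hψ'0
  have F3 : n * R ^ 2 ≤ A2 * (n * S - P ^ 2) := by
    calc n * R ^ 2 ≤ n * (A2 * (S - P ^ 2 / n)) := by
          exact mul_le_mul_of_nonneg_left hCS hn0.le
      _ = A2 * (n * (S - P ^ 2 / n)) := by ring
      _ = A2 * (n * S - P ^ 2) := by rw [e]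
  have step1 : cn ^ 2 * P ^ 2 ≤ (B + R) ^ 2 := by
    have h1 : (cn * P) ^ 2 ≤ (B + R) ^ 2 :=
      pow_le_pow_left₀ (mul_nonneg hcn hP.le) h4 2
    calc cn ^ 2 * P ^ 2 = (cn * P) ^ 2 := by ring
      _ ≤ (B + R) ^ 2 := h1
  have step2 : ε * (B + R) ^ 2 ≤ (1 + ε) * B ^ 2 + ε * (1 + ε) * R ^ 2 := by
    nlinarith [sq_nonneg (B - ε * R)]
  have hn2 : n ≤ n ^ 2 := by nlinarith
  have H : ε * P ^ 2 * lam1 * (A2 + n * cn ^ 2)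
      ≤ ε * (1 + ε) * n * S * D + (1 + ε) * lam1 * n ^ 2 * B ^ 2 := by
    have q1 : ε * n * lam1 * (cn ^ 2 * P ^ 2) ≤ ε * n * lam1 * ((B + R) ^ 2) :=
      mul_le_mul_of_nonneg_left step1 (by positivity)
    have q2 : n * lam1 * (ε * (B + R) ^ 2)
        ≤ n * lam1 * ((1 + ε) * B ^ 2 + ε * (1 + ε) * R ^ 2) :=
      mul_le_mul_of_nonneg_left step2 (by positivity)
    have q3 : ε * (1 + ε) * lam1 * (n * R ^ 2) ≤ ε * (1 + ε) * lam1 * (A2 * (n * S - P ^ 2)) :=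
      mul_le_mul_of_nonneg_left F3 (by positivity)
    have q4 : (lam1 * A2) * (ε * (1 + ε) * (n * S - P ^ 2))
        ≤ D * (ε * (1 + ε) * (n * S - P ^ 2)) :=
      mul_le_mul_of_nonneg_right hpo (by positivity)
    have q5 : (lam1 * A2) * (ε * P ^ 2) ≤ D * (ε * P ^ 2) :=
      mul_le_mul_of_nonneg_right hpo (by positivity)
    have q6 : (1 + ε) * lam1 * B ^ 2 * n ≤ (1 + ε) * lam1 * B ^ 2 * n ^ 2 :=
      mul_le_mul_of_nonneg_left hn2 (by positivity)
    have q7 : 0 ≤ ε ^ 2 * P ^ 2 * D := by positivity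
    nlinarith [q1, q2, q3, q4, q5, q6, q7]
  have e1 : (1 + ε) * ((n * S / P ^ 2) / lam1) * D + ((1 + ε) / ε) * (n ^ 2 / P ^ 2) * B ^ 2
      = (ε * (1 + ε) * n * S * D + (1 + ε) * lam1 * n ^ 2 * B ^ 2) / (ε * (P ^ 2 * lam1)) := by
    field_simp
  rw [e1, le_div_iff₀ (by positivity)]
  calc (A2 + n * cn ^ 2) * (ε * (P ^ 2 * lam1)) = ε * P ^ 2 * lam1 * (A2 + n * cn ^ 2) := by ring
    _ ≤ _ := H

end PoincareAux

theorem poincare_with_functional_eps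
    {V : Type*} [Fintype V] (w : V → V → ℝ)
    (hsym : ∀ u v, w u v = w v u) (hnn : ∀ u v, 0 ≤ w u v)
    (hdiag : ∀ v, w v v = 0)
    (hconn : (SimpleGraph.fromRel fun u v : V => w u v ≠ 0).Connected)
    (hcard : 1 < Fintype.card V)
    (lam1 : ℝ) (hlam : IsLeast {μ : ℝ | μ ≠ 0 ∧ IsEigen w μ} lam1)
    (ψ : V → ℂ) (hψ : gip (fun _ => 1) ψ ≠ 0)
    (f : V → ℂ) (ε : ℝ) (hε : 0 < ε) :
    normSq f ≤
      (1 + ε) * (((Fintype.card V : ℝ) * normSq ψ / ‖gip (fun _ => (1 : ℂ)) ψ‖ ^ 2) / lam1)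
          * gradSq w f
        + ((1 + ε) / ε) * ((Fintype.card V : ℝ) ^ 2 / ‖gip (fun _ => (1 : ℂ)) ψ‖ ^ 2)
          * ‖gip f ψ‖ ^ 2 := by
  classical
  have hcard0 : 0 < Fintype.card V := lt_trans one_pos hcard
  have hnC : ((Fintype.card V : ℂ)) ≠ 0 := by
    exact_mod_cast Nat.cast_ne_zero.mpr hcard0.ne'
  set n : ℝ := (Fintype.card V : ℝ) with hn_def
  have hn1 : (1 : ℝ) ≤ n := by
    rw [hn_def]; exact_mod_cast hcard.le
  have hn0 : (0 : ℝ) < n := lt_of_lt_of_le one_pos hn1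
  -- positivity of lam1
  obtain ⟨⟨hl_ne, e0, he0ne, he0⟩, hlb⟩ := hlam
  have hlam_pos : 0 < lam1 := by
    have h1 : gip (lap w e0) e0 = ((lam1 * normSq e0 : ℝ) : ℂ) := by
      rw [he0]
      have : gip (fun v => (lam1 : ℂ) * e0 v) e0 = (lam1 : ℂ) * gip e0 e0 := by
        unfold gip
        rw [Finset.mul_sum]
        exact Finset.sum_congr rfl fun v _ => by ring
      rw [this, gip_self']
      push_cast; ring
    rw [gip_lap_self' w hsym] at h1
    have h2 : gradSq w e0 = lam1 * normSq e0 := by exact_mod_cast h1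
    have h3 : 0 ≤ lam1 * normSq e0 := h2 ▸ gradSq_nonneg' w hnn e0
    have h4 : 0 < normSq e0 := normSq_pos' e0 he0ne
    rcases lt_trichotomy lam1 0 with h | h | h
    · nlinarith
    · exact absurd h hl_ne
    · exact h
  have hlam' : IsLeast {μ : ℝ | μ ≠ 0 ∧ IsEigen w μ} lam1 := ⟨⟨hl_ne, e0, he0ne, he0⟩, hlb⟩
  -- decomposition of f
  set c : ℂ := (∑ v, f v) / (Fintype.card V : ℂ) with hc_def
  set g : V → ℂ := fun v => f v - c with hg_def
  have hgsum : ∑ v, g v = 0 := sum_center f hnC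
  have hfg : f = fun v => g v + c := by funext v; simp [hg_def]
  have hdec : normSq f = normSq g + n * ‖c‖ ^ 2 := by
    rw [hn_def]
    calc normSq f = normSq (fun v => g v + c) := by rw [← hfg]
      _ = normSq g + (Fintype.card V : ℝ) * ‖c‖ ^ 2 := pythagoras g c hgsum
  -- decomposition of ψ
  set d : ℂ := (∑ v, ψ v) / (Fintype.card V : ℂ) with hd_def
  set ψ' : V → ℂ := fun v => ψ v - d with hψ'_def
  have hψ'sum : ∑ v, ψ' v = 0 := sum_center ψ hnC
  have hdecψ : normSq ψ = normSq ψ' + n * ‖d‖ ^ 2 := by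
    rw [hn_def]
    have hfψ : ψ = fun v => ψ' v + d := by funext v; simp [hψ'_def]
    calc normSq ψ = normSq (fun v => ψ' v + d) := by rw [← hfψ]
      _ = normSq ψ' + (Fintype.card V : ℝ) * ‖d‖ ^ 2 := pythagoras ψ' d hψ'sum
  -- P and its relation to d
  set P : ℝ := ‖gip (fun _ => (1 : ℂ)) ψ‖ with hP_def
  have hP : 0 < P := norm_pos_iff.mpr hψ
  have hgipχ : gip (fun _ => (1 : ℂ)) ψ = (starRingEnd ℂ) (∑ v, ψ v) := by
    unfold gip
    rw [map_sum]
    exact Finset.sum_congr rfl fun v _ => by rw [one_mul]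
  have hPsum : P = ‖∑ v, ψ v‖ := by
    rw [hP_def, hgipχ, RCLike.norm_conj]
  have hdnorm : ‖d‖ = P / n := by
    rw [hd_def, norm_div, hPsum, hn_def]
    norm_num
  have hnd : n * ‖d‖ ^ 2 = P ^ 2 / n := by
    rw [hdnorm, div_pow]
    field_simp
  have ht2 : normSq ψ' = normSq ψ - P ^ 2 / n := by
    rw [hdecψ, hnd]; ring
  -- gip g ψ = gip g ψ'
  have hgψ : gip g ψ = gip g ψ' := by
    unfold gip
    rw [hψ'_def]
    simp only [map_sub, mul_sub, Finset.sum_sub_distrib, ← Finset.sum_mul, hgsum, zero_mul,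
      sub_zero]
  -- Cauchy-Schwarz
  have hCS : ‖gip g ψ‖ ^ 2 ≤ normSq g * (normSq ψ - P ^ 2 / n) := by
    rw [hgψ, ← ht2]
    exact gip_cs g ψ'
  -- functional decomposition
  have hPsiDec : gip f ψ = gip g ψ + c * gip (fun _ => (1 : ℂ)) ψ := by
    unfold gip
    rw [Finset.mul_sum, ← Finset.sum_add_distrib]
    refine Finset.sum_congr rfl fun v _ => ?_
    rw [hfg]
    ring
  have h4 : ‖c‖ * P ≤ ‖gip f ψ‖ + ‖gip g ψ‖ := by
    have : c * gip (fun _ => (1 : ℂ)) ψ = gip f ψ - gip g ψ := by rw [hPsiDec]; ring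
    calc ‖c‖ * P = ‖c * gip (fun _ => (1 : ℂ)) ψ‖ := by rw [norm_mul, hP_def]
      _ = ‖gip f ψ - gip g ψ‖ := by rw [this]
      _ ≤ ‖gip f ψ‖ + ‖gip g ψ‖ := norm_sub_le _ _
  -- Poincare
  have hgradeq : gradSq w g = gradSq w f := by
    unfold gradSq
    congr 1
    refine Finset.sum_congr rfl fun u _ => Finset.sum_congr rfl fun v _ => ?_
    rw [hg_def]
    ring_nf
  have hpo : lam1 * normSq g ≤ gradSq w f := by
    rw [← hgradeq]
    exact poincare_orth w hsym hnn hconn lam1 hlam' g hgsum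
  -- real arithmetic
  set A2 : ℝ := normSq g with hA2_def
  set R : ℝ := ‖gip g ψ‖ with hR_def
  set B : ℝ := ‖gip f ψ‖ with hB_def
  set D : ℝ := gradSq w f with hD_def
  set S : ℝ := normSq ψ with hS_def
  have hA2 : 0 ≤ A2 := normSq_nonneg' g
  have hR0 : 0 ≤ R := norm_nonneg _
  have hB0 : 0 ≤ B := norm_nonneg _
  have hD0 : 0 ≤ D := gradSq_nonneg' w hnn f
  have hS0 : 0 ≤ S := normSq_nonneg' ψ
  have hψ'0 : 0 ≤ S - P ^ 2 / n := ht2 ▸ normSq_nonneg' ψ'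
  rw [hdec]
  exact final_arith n P A2 R B D S lam1 ε ‖c‖ hn1 hP hε hlam_pos hA2 hR0 hB0 hD0 hψ'0 hCS h4
    (norm_nonneg c) hpo
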